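/- Let 𝒞 be an odd symmetric constellation with p = 2r−1 stars and n vertices, with its stars ordered as S_1,…,S_p so that S_r is the unique star whose size occurs an odd number of times, |S_i| = |S_{p−i+1}| for every i = 1,…,r−1, and |S_i| ≤ |S_{i+1}| for every i = 1,…,r−2, and let c_i denote the center of S_i. Then 𝒞 admits a super edge-magic labeling f such that f(c_i) = i for i = 1,…,p and, whenever n > p, the smallest element of the set {f(u)+f(v) : uv ∈ E(𝒞)} equals r+p+1. -/

import Mathlib

namespace ConstLab

/-- number of active "lower" stars (0-based indices 0..r-2) in round k -/
def uu (r : ℕ) (mv : ℕ → ℕ) (k : ℕ) : ℕ :=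
  ((Finset.range (r - 1)).filter fun i => k ≤ mv i).card

def midv (r : ℕ) (mv : ℕ → ℕ) (k : ℕ) : ℕ := if k ≤ mv (r - 1) then 1 else 0

def actv (r : ℕ) (mv : ℕ → ℕ) (k : ℕ) : ℕ := 2 * uu r mv k + midv r mv k

def TT (p : ℕ) (mv : ℕ → ℕ) (k : ℕ) : ℕ := ∑ i ∈ Finset.range p, min (mv i) k

def MM (p : ℕ) (mv : ℕ → ℕ) : ℕ := ∑ i ∈ Finset.range p, mv i

def post (r : ℕ) (mv : ℕ → ℕ) (I k : ℕ) : ℕ :=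
  if I + 1 < r then uu r mv k + (uu r mv k - (r - 1 - I)) + 1
  else if I + 1 = r then 2 * uu r mv k + 1
  else I + 1 - r

def poss (r : ℕ) (mv : ℕ → ℕ) (I k : ℕ) : ℕ :=
  if I + 1 < r then 2 * (uu r mv k - (r - 1 - I)) + 1
  else if I + 1 = r then 2 * uu r mv k + 1
  else 2 * (I + 1 - r)

lemma uu_le (r : ℕ) (mv : ℕ → ℕ) (k : ℕ) : uu r mv k ≤ r - 1 :=
  (Finset.card_filter_le _ _).trans (by simp)

section hyps

variable (r p : ℕ) (mv : ℕ → ℕ)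
variable (hr : 1 ≤ r) (hp : p = 2 * r - 1)
variable (hsort : ∀ a b : ℕ, a ≤ b → b + 1 ≤ r - 1 → mv a ≤ mv b)
variable (hmir : ∀ j : ℕ, 1 ≤ j → j ≤ r - 1 → mv (r - 1 + j) = mv (r - 1 - j))

include hsort in
lemma uu_iff (j k : ℕ) (hj1 : 1 ≤ j) (hj2 : j ≤ r - 1) :
    j ≤ uu r mv k ↔ k ≤ mv (r - 1 - j) := by
  constructor
  · intro h
    by_contra hc
    push_neg at hc
    have hsub : (Finset.range (r - 1)).filter (fun i => k ≤ mv i) ⊆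
        Finset.Ico (r - j) (r - 1) := by
      intro i hi
      simp only [Finset.mem_filter, Finset.mem_range] at hi
      simp only [Finset.mem_Ico]
      refine ⟨?_, hi.1⟩
      by_contra hlt
      push_neg at hlt
      have := hsort i (r - 1 - j) (by omega) (by omega)
      omega
    have hcard := Finset.card_le_card hsub
    rw [Nat.card_Ico] at hcard
    unfold uu at h
    omega
  · intro h
    have hsub : Finset.Ico (r - 1 - j) (r - 1) ⊆
        (Finset.range (r - 1)).filter (fun i => k ≤ mv i) := by
      intro i hi
      simp only [Finset.mem_Ico] at hi
      simp only [Finset.mem_filter, Finset.mem_range]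
      exact ⟨hi.2, le_trans h (hsort (r - 1 - j) i hi.1 (by omega))⟩
    have hcard := Finset.card_le_card hsub
    rw [Nat.card_Ico] at hcard
    unfold uu
    omega

include hsort in
lemma mem_iff_lower (I k : ℕ) (hI : I + 1 < r) :
    k ≤ mv I ↔ r - 1 - I ≤ uu r mv k := by
  have h := uu_iff r mv hsort (r - 1 - I) k (by omega) (by omega)
  have hI' : r - 1 - (r - 1 - I) = I := by omega
  rw [hI'] at h
  exact h.symm

include hsort hmir hp in
lemma mem_iff_upper (I k : ℕ) (hI1 : r ≤ I) (hI2 : I < p) :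
    k ≤ mv I ↔ I + 1 - r ≤ uu r mv k := by
  have hj1 : 1 ≤ I + 1 - r := by omega
  have hj2 : I + 1 - r ≤ r - 1 := by omega
  have h := uu_iff r mv hsort (I + 1 - r) k hj1 hj2
  have hIdx2 : mv I = mv (r - 1 - (I + 1 - r)) := by
    rw [← hmir (I + 1 - r) hj1 hj2]
    congr 1
    omega
  rw [hIdx2]
  exact h.symm

include hsort hmir hp in
lemma key_trich (k I : ℕ) (hIp : I < p) (hIk : k ≤ mv I) :
    (I + 1 < r ∧ 1 ≤ r - 1 - I ∧ r - 1 - I ≤ uu r mv k) ∨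
    (I + 1 = r) ∨
    (r < I + 1 ∧ 1 ≤ I + 1 - r ∧ I + 1 - r ≤ uu r mv k) := by
  rcases lt_trichotomy (I + 1) r with h | h | h
  · exact Or.inl ⟨h, by omega, (mem_iff_lower r mv hsort I k h).mp hIk⟩
  · exact Or.inr (Or.inl h)
  · exact Or.inr (Or.inr ⟨h, by omega,
      (mem_iff_upper r p mv hp hsort hmir I k (by omega) hIp).mp hIk⟩)

include hr hp hsort hmir in
lemma round_bij_post (k : ℕ) (hk : 1 ≤ k) :
    Set.BijOn (fun I => post r mv I k) {I | I < p ∧ k ≤ mv I}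
      (Set.Icc 1 (actv r mv k)) := by
  have hu := uu_le r mv k
  refine ⟨?_, ?_, ?_⟩
  · rintro I ⟨hIp, hIk⟩
    have hmid : midv r mv k ≤ 1 := by unfold midv; split <;> omega
    simp only [Set.mem_Icc]
    rcases key_trich r p mv hp hsort hmir k I hIp hIk with ⟨h1, h2, h3⟩ | h1 | ⟨h1, h2, h3⟩
    · unfold post actv
      rw [if_pos h1]
      omega
    · have hmid1 : midv r mv k = 1 := by
        unfold midv
        rw [if_pos (by rw [show r - 1 = I by omega]; exact hIk)]
      unfold post actv
      rw [if_neg (by omega), if_pos h1]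
      omega
    · unfold post actv
      rw [if_neg (by omega), if_neg (by omega)]
      omega
  · rintro I ⟨hIp, hIk⟩ I' ⟨hI'p, hI'k⟩ h
    simp only at h
    unfold post at h
    rcases key_trich r p mv hp hsort hmir k I hIp hIk with ⟨h1, h2, h3⟩ | h1 | ⟨h1, h2, h3⟩ <;>
      rcases key_trich r p mv hp hsort hmir k I' hI'p hI'k with ⟨g1, g2, g3⟩ | g1 | ⟨g1, g2, g3⟩ <;>
      [ rw [if_pos h1, if_pos g1] at h;
        rw [if_pos h1, if_neg (by omega), if_pos g1] at h;
        rw [if_pos h1, if_neg (by omega), if_neg (by omega)] at h;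
        rw [if_neg (by omega), if_pos h1, if_pos g1] at h;
        rw [if_neg (by omega), if_pos h1, if_neg (by omega), if_pos g1] at h;
        rw [if_neg (by omega), if_pos h1, if_neg (by omega), if_neg (by omega)] at h;
        rw [if_neg (by omega), if_neg (by omega), if_pos g1] at h;
        rw [if_neg (by omega), if_neg (by omega), if_neg (by omega), if_pos g1] at h;
        rw [if_neg (by omega), if_neg (by omega), if_neg (by omega), if_neg (by omega)] at h ] <;>
      omega
  · rintro y ⟨hy1, hy2⟩
    have hmid : midv r mv k ≤ 1 := by unfold midv; split <;> omega
    unfold actv at hy2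
    rcases le_or_gt y (uu r mv k) with hy | hy
    · -- upper star
      refine ⟨r + y - 1, ⟨by omega, ?_⟩, ?_⟩
      · exact (mem_iff_upper r p mv hp hsort hmir (r + y - 1) k (by omega) (by omega)).mpr
          (by omega)
      · simp only
        unfold post
        rw [if_neg (by omega), if_neg (by omega)]
        omega
    · rcases le_or_gt y (2 * uu r mv k) with hy' | hy'
      · -- lower star, j = 2u+1-y
        refine ⟨r - 1 - (2 * uu r mv k + 1 - y), ⟨by omega, ?_⟩, ?_⟩
        · exact (mem_iff_lower r mv hsort _ k (by omega)).mpr (by omega)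
        · simp only
          unfold post
          rw [if_pos (by omega)]
          omega
      · -- middle star
        have hmid1 : midv r mv k = 1 := by omega
        have hkm : k ≤ mv (r - 1) := by
          unfold midv at hmid1
          by_contra hc
          rw [if_neg hc] at hmid1
          omega
        refine ⟨r - 1, ⟨by omega, hkm⟩, ?_⟩
        simp only
        unfold post
        rw [if_neg (by omega), if_pos (by omega)]
        omega

include hr hp hsort hmir in
lemma round_bij_poss (k : ℕ) (hk : 1 ≤ k) :
    Set.BijOn (fun I => poss r mv I k) {I | I < p ∧ k ≤ mv I}
      (Set.Icc 1 (actv r mv k)) := by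
  have hu := uu_le r mv k
  refine ⟨?_, ?_, ?_⟩
  · rintro I ⟨hIp, hIk⟩
    have hmid : midv r mv k ≤ 1 := by unfold midv; split <;> omega
    simp only [Set.mem_Icc]
    rcases key_trich r p mv hp hsort hmir k I hIp hIk with ⟨h1, h2, h3⟩ | h1 | ⟨h1, h2, h3⟩
    · unfold poss actv
      rw [if_pos h1]
      omega
    · have hmid1 : midv r mv k = 1 := by
        unfold midv
        rw [if_pos (by rw [show r - 1 = I by omega]; exact hIk)]
      unfold poss actv
      rw [if_neg (by omega), if_pos h1]
      omega
    · unfold poss actv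
      rw [if_neg (by omega), if_neg (by omega)]
      omega
  · rintro I ⟨hIp, hIk⟩ I' ⟨hI'p, hI'k⟩ h
    simp only at h
    unfold poss at h
    rcases key_trich r p mv hp hsort hmir k I hIp hIk with ⟨h1, h2, h3⟩ | h1 | ⟨h1, h2, h3⟩ <;>
      rcases key_trich r p mv hp hsort hmir k I' hI'p hI'k with ⟨g1, g2, g3⟩ | g1 | ⟨g1, g2, g3⟩ <;>
      [ rw [if_pos h1, if_pos g1] at h;
        rw [if_pos h1, if_neg (by omega), if_pos g1] at h;
        rw [if_pos h1, if_neg (by omega), if_neg (by omega)] at h;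
        rw [if_neg (by omega), if_pos h1, if_pos g1] at h;
        rw [if_neg (by omega), if_pos h1, if_neg (by omega), if_pos g1] at h;
        rw [if_neg (by omega), if_pos h1, if_neg (by omega), if_neg (by omega)] at h;
        rw [if_neg (by omega), if_neg (by omega), if_pos g1] at h;
        rw [if_neg (by omega), if_neg (by omega), if_neg (by omega), if_pos g1] at h;
        rw [if_neg (by omega), if_neg (by omega), if_neg (by omega), if_neg (by omega)] at h ] <;>
      omega
  · rintro y ⟨hy1, hy2⟩
    have hmid : midv r mv k ≤ 1 := by unfold midv; split <;> omega
    unfold actv at hy2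
    rcases Nat.even_or_odd y with ⟨j, hj⟩ | ⟨j, hj⟩
    · -- even: upper star with I+1-r = j
      refine ⟨r + j - 1, ⟨by omega, ?_⟩, ?_⟩
      · exact (mem_iff_upper r p mv hp hsort hmir (r + j - 1) k (by omega) (by omega)).mpr
          (by omega)
      · simp only
        unfold poss
        rw [if_neg (by omega), if_neg (by omega)]
        omega
    · -- odd y = 2j+1
      rcases lt_or_ge j (uu r mv k) with hju | hju
      · -- lower star with u - (r-1-I) = j, i.e. r-1-I = u - j
        refine ⟨r - 1 - (uu r mv k - j), ⟨by omega, ?_⟩, ?_⟩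
        · exact (mem_iff_lower r mv hsort _ k (by omega)).mpr (by omega)
        · simp only
          unfold poss
          rw [if_pos (by omega)]
          omega
      · -- middle star, y = 2u+1
        have hmid1 : midv r mv k = 1 := by omega
        have hkm : k ≤ mv (r - 1) := by
          unfold midv at hmid1
          by_contra hc
          rw [if_neg hc] at hmid1
          omega
        refine ⟨r - 1, ⟨by omega, hkm⟩, ?_⟩
        simp only
        unfold poss
        rw [if_neg (by omega), if_pos (by omega)]
        omega

include hsort hmir hp in
lemma post_poss (I k : ℕ) (hIp : I < p) (hIk : k ≤ mv I) :
    post r mv I k + (I + 1) = r + poss r mv I k := by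
  have hu := uu_le r mv k
  unfold post poss
  rcases key_trich r p mv hp hsort hmir k I hIp hIk with ⟨h1, h2, h3⟩ | h1 | ⟨h1, h2, h3⟩
  · rw [if_pos h1, if_pos h1]; omega
  · rw [if_neg (by omega), if_pos h1, if_neg (by omega), if_pos h1]; omega
  · rw [if_neg (by omega), if_neg (by omega), if_neg (by omega), if_neg (by omega)]; omega

end hyps

lemma TT_zero (p : ℕ) (mv : ℕ → ℕ) : TT p mv 0 = 0 := by
  unfold TT; simp

lemma TT_mono (p : ℕ) (mv : ℕ → ℕ) {k k' : ℕ} (h : k ≤ k') : TT p mv k ≤ TT p mv k' :=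
  Finset.sum_le_sum fun i _ => min_le_min le_rfl h

lemma TT_le_MM (p : ℕ) (mv : ℕ → ℕ) (k : ℕ) : TT p mv k ≤ MM p mv :=
  Finset.sum_le_sum fun i _ => min_le_left _ _

lemma TT_MM (p : ℕ) (mv : ℕ → ℕ) : TT p mv (MM p mv) = MM p mv := by
  unfold TT MM
  refine Finset.sum_congr rfl fun i hi => ?_
  exact min_eq_left (Finset.single_le_sum (fun j _ => Nat.zero_le (mv j)) hi)

lemma TT_succ_card (p : ℕ) (mv : ℕ → ℕ) (k : ℕ) :
    TT p mv (k + 1) = TT p mv k + ((Finset.range p).filter fun i => k + 1 ≤ mv i).card := by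
  unfold TT
  rw [Finset.card_filter, ← Finset.sum_add_distrib]
  refine Finset.sum_congr rfl fun i _ => ?_
  rcases le_or_gt (k + 1) (mv i) with h | h
  · rw [if_pos h, min_eq_right h, min_eq_right (by omega)]
  · rw [if_neg (by omega), min_eq_left (by omega), min_eq_left (by omega)]
    omega

section hyps2

variable (r p : ℕ) (mv : ℕ → ℕ)
variable (hr : 1 ≤ r) (hp : p = 2 * r - 1)
variable (hsort : ∀ a b : ℕ, a ≤ b → b + 1 ≤ r - 1 → mv a ≤ mv b)
variable (hmir : ∀ j : ℕ, 1 ≤ j → j ≤ r - 1 → mv (r - 1 + j) = mv (r - 1 - j))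

include hr hp hsort hmir in
lemma act_eq_card (k : ℕ) (hk : 1 ≤ k) :
    actv r mv k = ((Finset.range p).filter fun i => k ≤ mv i).card := by
  have hb := round_bij_post r p mv hr hp hsort hmir k hk
  have h1 : {I | I < p ∧ k ≤ mv I} = ↑((Finset.range p).filter fun i => k ≤ mv i) := by
    ext i
    simp [Finset.mem_filter, Finset.mem_range]
  have h2 : (Set.Icc 1 (actv r mv k)).ncard = {I | I < p ∧ k ≤ mv I}.ncard := by
    rw [← hb.image_eq, Set.ncard_image_of_injOn hb.injOn]
  rw [h1, Set.ncard_coe_finset] at h2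
  rw [← Finset.coe_Icc, Set.ncard_coe_finset, Nat.card_Icc] at h2
  omega

include hr hp hsort hmir in
lemma TT_succ (k : ℕ) (hk : 1 ≤ k) :
    TT p mv k = TT p mv (k - 1) + actv r mv k := by
  have h := TT_succ_card p mv (k - 1)
  rw [show k - 1 + 1 = k by omega] at h
  rw [h, act_eq_card r p mv hr hp hsort hmir k hk]

include hr hp hsort hmir in
lemma core_bij (q : ℕ → ℕ → ℕ)
    (hq : ∀ k, 1 ≤ k → Set.BijOn (fun I => q I k) {I | I < p ∧ k ≤ mv I}
      (Set.Icc 1 (actv r mv k))) :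
    Set.BijOn (fun x : ℕ × ℕ => TT p mv (x.2 - 1) + q x.1 x.2)
      {x : ℕ × ℕ | x.1 < p ∧ 1 ≤ x.2 ∧ x.2 ≤ mv x.1} (Set.Icc 1 (MM p mv)) := by
  refine ⟨?_, ?_, ?_⟩
  · rintro ⟨I, k⟩ ⟨hIp, hk1, hkm⟩
    have hmem := (hq k hk1).mapsTo ⟨hIp, hkm⟩
    simp only [Set.mem_Icc] at hmem ⊢
    have hTk := TT_succ r p mv hr hp hsort hmir k hk1
    have := TT_le_MM p mv k
    omega
  · rintro ⟨I, k⟩ ⟨hIp, hk1, hkm⟩ ⟨I', k'⟩ ⟨hI'p, hk'1, hk'm⟩ h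
    simp only at h
    have hm := (hq k hk1).mapsTo ⟨hIp, hkm⟩
    have hm' := (hq k' hk'1).mapsTo ⟨hI'p, hk'm⟩
    simp only [Set.mem_Icc] at hm hm'
    have hTk := TT_succ r p mv hr hp hsort hmir k hk1
    have hTk' := TT_succ r p mv hr hp hsort hmir k' hk'1
    have hkk : k = k' := by
      rcases lt_trichotomy k k' with hc | hc | hc
      · have := TT_mono p mv (show k ≤ k' - 1 by omega)
        omega
      · exact hc
      · have := TT_mono p mv (show k' ≤ k - 1 by omega)
        omega
    subst hkk
    have hq' : q I k = q I' k := by omega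
    have := (hq k hk1).injOn ⟨hIp, hkm⟩ ⟨hI'p, hk'm⟩ hq'
    simp only at this
    simp [this]
  · rintro y ⟨hy1, hy2⟩
    have hex : ∃ K, y ≤ TT p mv K := ⟨MM p mv, by rw [TT_MM]; exact hy2⟩
    classical
    set k := Nat.find hex with hkdef
    have hky : y ≤ TT p mv k := Nat.find_spec hex
    have hk1 : 1 ≤ k := by
      rcases Nat.eq_zero_or_pos k with h0 | h0
      · rw [h0, TT_zero] at hky; omega
      · exact h0
    have hkprev : ¬ y ≤ TT p mv (k - 1) := Nat.find_min hex (by omega)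
    have hTk := TT_succ r p mv hr hp hsort hmir k hk1
    have hmem : y - TT p mv (k - 1) ∈ Set.Icc 1 (actv r mv k) := by
      simp only [Set.mem_Icc]; omega
    obtain ⟨I, hI, hqI⟩ := (hq k hk1).surjOn hmem
    simp only at hqI
    exact ⟨(I, k), ⟨hI.1, hk1, hI.2⟩, by simp only; omega⟩

end hyps2

def mvf (p : ℕ) (m : Fin p → ℕ) (i : ℕ) : ℕ := if h : i < p then m ⟨i, h⟩ else 0

def gv (r p : ℕ) (m : Fin p → ℕ) (x : Σ i : Fin p, Fin (m i + 1)) : ℕ :=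
  if x.2.val = 0 then x.1.val + 1
  else p + (TT p (mvf p m) (x.2.val - 1) + post r (mvf p m) x.1.val x.2.val)

def S2v (r p : ℕ) (m : Fin p → ℕ) : Sym2 (Σ i : Fin p, Fin (m i + 1)) → ℕ :=
  Sym2.lift ⟨fun a b => gv r p m a + gv r p m b, fun a b => Nat.add_comm _ _⟩

lemma S2v_mk (r p : ℕ) (m : Fin p → ℕ) (a b : Σ i : Fin p, Fin (m i + 1)) :
    S2v r p m s(a, b) = gv r p m a + gv r p m b := rfl

end ConstLab


open ConstLab

/-- An edge-magic labeling of an `n`-vertex graph `G` with `m` edges and magic constant `k`: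
a bijection `f : V ∪ E → {1,…,n+m}` with `f(u)+f(v)+f(uv) = k` for every edge `uv`. -/
def IsEdgeMagicLabeling {V : Type*} [Fintype V] (G : SimpleGraph V)
    (f : V ⊕ ↥G.edgeSet → ℕ) (k : ℕ) : Prop :=
  Set.BijOn f Set.univ (Set.Icc 1 (Fintype.card V + G.edgeSet.ncard)) ∧
  ∀ (u v : V) (h : G.Adj u v),
    f (Sum.inl u) + f (Sum.inl v) + f (Sum.inr ⟨s(u, v), (G.mem_edgeSet).mpr h⟩) = k

/-- A super edge-magic labeling: an edge-magic labeling whose vertex labels are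
exactly `{1,…,n}`. -/
def IsSuperEdgeMagicLabeling {V : Type*} [Fintype V] (G : SimpleGraph V)
    (f : V ⊕ ↥G.edgeSet → ℕ) : Prop :=
  (∃ k, IsEdgeMagicLabeling G f k) ∧
  Set.range (fun v : V => f (Sum.inl v)) = Set.Icc 1 (Fintype.card V)

/-- The constellation consisting of the `p` disjoint stars `S_1, …, S_p`, where `S_i` has
`m i` edges.  The vertices of `S_i` are `⟨i, 0⟩` (its center `c_i`) and the leaves
`⟨i, 1⟩, …, ⟨i, m i⟩`. -/
def constellationGraph (p : ℕ) (m : Fin p → ℕ) :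
    SimpleGraph (Σ i : Fin p, Fin (m i + 1)) where
  Adj a b := a.1 = b.1 ∧ ((a.2.val = 0 ∧ b.2.val ≠ 0) ∨ (a.2.val ≠ 0 ∧ b.2.val = 0))
  symm := by constructor; rintro ⟨i, x⟩ ⟨j, y⟩ ⟨h1, h2⟩; exact ⟨h1.symm, by tauto⟩
  loopless := by constructor; rintro ⟨i, x⟩ ⟨-, h⟩; tauto

/-- Let `𝒞` be an odd symmetric constellation with `p = 2r−1` stars
`S_1,…,S_p` (star `S_{i+1}` having `m i` edges, indices 0-based) ordered so that `S_r` is the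
unique star whose size occurs an odd number of times, `|S_i| = |S_{p−i+1}|` for `i = 1,…,r−1`,
and `|S_i| ≤ |S_{i+1}|` for `i = 1,…,r−2`.  Then `𝒞` admits a super edge-magic labeling `f`
with `f(c_i) = i` for `i = 1,…,p` and, whenever `n > p`, the smallest element of
`{f(u)+f(v) : uv ∈ E(𝒞)}` equals `r+p+1`. -/
theorem standard_labeling_of_odd_symmetric_constellation
    (r p : ℕ) (hr : 1 ≤ r) (hp : p = 2 * r - 1) (m : Fin p → ℕ)
    (hmirror : ∀ i j : Fin p, i.val + 1 ≤ r - 1 → i.val + j.val = p - 1 → m i = m j)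
    (hmono : ∀ i j : Fin p, i.val + 1 ≤ r - 2 → j.val = i.val + 1 → m i ≤ m j)
    (hodd : Odd ((Finset.univ.filter
      fun i : Fin p => m i = m ⟨r - 1, by omega⟩).card))
    (heven : ∀ t : ℕ, t ≠ m ⟨r - 1, by omega⟩ →
      Even ((Finset.univ.filter fun i : Fin p => m i = t).card)) :
    ∃ f : (Σ i : Fin p, Fin (m i + 1)) ⊕ ↥(constellationGraph p m).edgeSet → ℕ,
      IsSuperEdgeMagicLabeling (constellationGraph p m) f ∧
      (∀ i : Fin p, f (Sum.inl ⟨i, 0⟩) = i.val + 1) ∧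
      (Fintype.card (Σ i : Fin p, Fin (m i + 1)) > p →
        IsLeast {x : ℕ | ∃ u v : Σ i : Fin p, Fin (m i + 1),
            (constellationGraph p m).Adj u v ∧ f (Sum.inl u) + f (Sum.inl v) = x}
          (r + p + 1)) := by
  classical
  set mv : ℕ → ℕ := mvf p m with hmvdef
  have hmv : ∀ i : Fin p, mv i.val = m i := by
    intro i
    simp [hmvdef, mvf, i.isLt]
  have hrp : r ≤ p := by omega
  -- sortedness of the first r-1 sizes
  have hsort : ∀ a b : ℕ, a ≤ b → b + 1 ≤ r - 1 → mv a ≤ mv b := by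
    intro a b hab hb
    induction b with
    | zero =>
      have : a = 0 := by omega
      rw [this]
    | succ c ih =>
      rcases Nat.lt_or_ge a (c + 1) with hlt | hge
      · have hstep : mv c ≤ mv (c + 1) := by
          have h1 : c < p := by omega
          have h2 : c + 1 < p := by omega
          have := hmono ⟨c, h1⟩ ⟨c + 1, h2⟩ (by show c + 1 ≤ r - 2; omega) rfl
          rw [← hmv ⟨c, h1⟩, ← hmv ⟨c + 1, h2⟩] at this
          exact this
        exact le_trans (ih (by omega) (by omega)) hstep
      · have : a = c + 1 := by omega
        rw [this]
  -- mirror symmetry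
  have hmir : ∀ j : ℕ, 1 ≤ j → j ≤ r - 1 → mv (r - 1 + j) = mv (r - 1 - j) := by
    intro j hj1 hj2
    have h1 : r - 1 - j < p := by omega
    have h2 : r - 1 + j < p := by omega
    have := hmirror ⟨r - 1 - j, h1⟩ ⟨r - 1 + j, h2⟩ (by simp; omega) (by simp; omega)
    rw [← hmv ⟨r - 1 - j, h1⟩, ← hmv ⟨r - 1 + j, h2⟩] at this
    exact this.symm
  set M := MM p mv with hMdef
  set n := p + M with hndef
  have hMsum : ∑ i : Fin p, m i = M := by
    rw [hMdef, MM, ← Fin.sum_univ_eq_sum_range (fun i => mv i) p]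
    exact Finset.sum_congr rfl fun i _ => (hmv i).symm
  have hcard : Fintype.card (Σ i : Fin p, Fin (m i + 1)) = n := by
    rw [Fintype.card_sigma]
    simp only [Fintype.card_fin]
    rw [Finset.sum_add_distrib, hMsum]
    simp [hndef]
    omega
  have corePost := core_bij r p mv hr hp hsort hmir (post r mv)
    (fun k hk => round_bij_post r p mv hr hp hsort hmir k hk)
  have corePoss := core_bij r p mv hr hp hsort hmir (poss r mv)
    (fun k hk => round_bij_poss r p mv hr hp hsort hmir k hk)
  have hdompair : ∀ (I : Fin p) (k : Fin (m I + 1)), k.val ≠ 0 →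
      ((I.val, k.val) : ℕ × ℕ) ∈ {x : ℕ × ℕ | x.1 < p ∧ 1 ≤ x.2 ∧ x.2 ≤ mv x.1} := by
    intro I k hk
    refine ⟨I.isLt, by omega, ?_⟩
    rw [hmv]
    have := k.isLt
    omega
  have vext : ∀ x y : (Σ i : Fin p, Fin (m i + 1)),
      x.1.val = y.1.val → x.2.val = y.2.val → x = y := by
    rintro ⟨⟨a, ha⟩, ⟨b, hb⟩⟩ ⟨⟨c, hc⟩, ⟨d, hd⟩⟩ h1 h2
    simp only at h1 h2
    subst h1
    subst h2
    rfl
  have hgval0 : ∀ (I : Fin p) (k : Fin (m I + 1)), k.val = 0 →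
      gv r p m ⟨I, k⟩ = I.val + 1 := by
    intro I k h
    simp only [gv]
    rw [if_pos h]
  have hgval1 : ∀ (I : Fin p) (k : Fin (m I + 1)), k.val ≠ 0 →
      gv r p m ⟨I, k⟩ = p + (TT p mv (k.val - 1) + post r mv I.val k.val) := by
    intro I k h
    simp only [gv]
    rw [if_neg h, ← hmvdef]
  have hgbij : Set.BijOn (gv r p m) Set.univ (Set.Icc 1 n) := by
    refine ⟨?_, ?_, ?_⟩
    · rintro ⟨I, k⟩ -
      by_cases h0 : k.val = 0
      · rw [hgval0 I k h0, Set.mem_Icc]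
        have := I.isLt
        omega
      · have hmem := corePost.mapsTo (hdompair I k h0)
        simp only [Set.mem_Icc] at hmem
        rw [hgval1 I k h0, Set.mem_Icc]
        omega
    · rintro ⟨I, k⟩ - ⟨I', k'⟩ - h
      by_cases h0 : k.val = 0 <;> by_cases h0' : k'.val = 0
      · rw [hgval0 I k h0, hgval0 I' k' h0'] at h
        exact vext ⟨I, k⟩ ⟨I', k'⟩ (show I.val = I'.val by omega) (show k.val = k'.val by omega)
      · exfalso
        rw [hgval0 I k h0, hgval1 I' k' h0'] at h
        have hmem := corePost.mapsTo (hdompair I' k' h0')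
        simp only [Set.mem_Icc] at hmem
        have := I.isLt
        omega
      · exfalso
        rw [hgval1 I k h0, hgval0 I' k' h0'] at h
        have hmem := corePost.mapsTo (hdompair I k h0)
        simp only [Set.mem_Icc] at hmem
        have := I'.isLt
        omega
      · rw [hgval1 I k h0, hgval1 I' k' h0'] at h
        have heq : TT p mv (k.val - 1) + post r mv I.val k.val =
            TT p mv (k'.val - 1) + post r mv I'.val k'.val := by omega
        have hinj := corePost.injOn (hdompair I k h0) (hdompair I' k' h0') heq
        exact vext _ _ (congrArg Prod.fst hinj) (congrArg Prod.snd hinj)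
    · intro y hy
      simp only [Set.mem_Icc] at hy
      rcases le_or_gt y p with hyp | hyp
      · refine ⟨⟨⟨y - 1, by omega⟩, 0⟩, Set.mem_univ _, ?_⟩
        rw [hgval0 _ _ rfl]
        show y - 1 + 1 = y
        omega
      · have ht : y - p ∈ Set.Icc 1 (MM p mv) := by
          simp only [Set.mem_Icc]
          omega
        obtain ⟨⟨I, k⟩, hdom, hval⟩ := corePost.surjOn ht
        obtain ⟨hIp, hk1, hkm⟩ := hdom
        have hmvI : mv I = m ⟨I, hIp⟩ := hmv ⟨I, hIp⟩
        have hkm' : k ≤ mv I := hkm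
        have hkIlt : k < m ⟨I, hIp⟩ + 1 := by omega
        refine ⟨⟨⟨I, hIp⟩, ⟨k, hkIlt⟩⟩, Set.mem_univ _, ?_⟩
        have hkne : ((⟨k, hkIlt⟩ : Fin (m ⟨I, hIp⟩ + 1)) : ℕ) ≠ 0 := by
          show ¬ (k = 0)
          omega
        rw [hgval1 _ _ hkne]
        have hval' : TT p mv ((⟨k, hkIlt⟩ : Fin (m ⟨I, hIp⟩ + 1)).val - 1) +
            post r mv (⟨I, hIp⟩ : Fin p).val (⟨k, hkIlt⟩ : Fin (m ⟨I, hIp⟩ + 1)).val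
            = y - p := hval
        omega
  -- value of gv on a leaf edge
  have hsumval : ∀ (I : Fin p) (k : Fin (m I + 1)), k.val ≠ 0 →
      gv r p m ⟨I, 0⟩ + gv r p m ⟨I, k⟩ =
        p + r + (TT p mv (k.val - 1) + poss r mv I.val k.val) := by
    intro I k hk
    have hdom := hdompair I k hk
    have hpp := post_poss r p mv hp hsort hmir I.val k.val hdom.1 (by rw [hmv]; have := k.isLt; omega)
    simp only [gv, Fin.val_zero, if_true, if_neg hk]
    simp only [hmvdef] at hpp ⊢
    omega
  have hedge : ∀ e ∈ (constellationGraph p m).edgeSet, ∃ (I : Fin p) (k : Fin (m I + 1)),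
      k.val ≠ 0 ∧ e = s((⟨I, 0⟩ : Σ i : Fin p, Fin (m i + 1)), ⟨I, k⟩) := by
    intro e he
    induction e with
    | _ u v =>
      rw [SimpleGraph.mem_edgeSet] at he
      obtain ⟨h1, h2⟩ := he
      rcases u with ⟨i, a⟩
      rcases v with ⟨j, b⟩
      simp only at h1
      subst h1
      rcases h2 with ⟨ha, hb⟩ | ⟨ha, hb⟩
      · have ha0 : a = 0 := Fin.ext ha
        exact ⟨i, b, hb, by rw [ha0]⟩
      · have hb0 : b = 0 := Fin.ext hb
        exact ⟨i, a, ha, by rw [hb0, Sym2.eq_swap]⟩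
  set kC := n + M + (r + p + 1) with hkCdef
  have hEdgeBij : Set.BijOn (fun e => kC - S2v r p m e) (constellationGraph p m).edgeSet
      (Set.Icc (n + 1) (n + M)) := by
    refine ⟨?_, ?_, ?_⟩
    · intro e he
      obtain ⟨I, k, hk, rfl⟩ := hedge e he
      have hmem := corePoss.mapsTo (hdompair I k hk)
      simp only [Set.mem_Icc] at hmem
      simp only [S2v_mk, hsumval I k hk, Set.mem_Icc]
      omega
    · intro e he e' he' h
      obtain ⟨I, k, hk, he2⟩ := hedge e he
      obtain ⟨I', k', hk', he2'⟩ := hedge e' he'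
      subst he2
      subst he2'
      simp only [S2v_mk, hsumval I k hk, hsumval I' k' hk'] at h
      have hmem := corePoss.mapsTo (hdompair I k hk)
      have hmem' := corePoss.mapsTo (hdompair I' k' hk')
      simp only [Set.mem_Icc] at hmem hmem'
      have heq : TT p mv (k.val - 1) + poss r mv I.val k.val =
          TT p mv (k'.val - 1) + poss r mv I'.val k'.val := by omega
      have hinj := corePoss.injOn (hdompair I k hk) (hdompair I' k' hk') heq
      have h1 : I = I' := Fin.ext (congrArg Prod.fst hinj)
      subst h1
      have h2 : k = k' := Fin.ext (congrArg Prod.snd hinj)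
      subst h2
      rfl
    · intro y hy
      simp only [Set.mem_Icc] at hy
      have ht : n + M + 1 - y ∈ Set.Icc 1 (MM p mv) := by
        simp only [Set.mem_Icc]
        omega
      obtain ⟨⟨I, k⟩, hdom, hval⟩ := corePoss.surjOn ht
      obtain ⟨hIp, hk1, hkm⟩ := hdom
      have hmvI : mv I = m ⟨I, hIp⟩ := hmv ⟨I, hIp⟩
      have hkm' : k ≤ mv I := hkm
      have hkIlt : k < m ⟨I, hIp⟩ + 1 := by omega
      have hkne : ((⟨k, hkIlt⟩ : Fin (m ⟨I, hIp⟩ + 1)) : ℕ) ≠ 0 := by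
        show ¬ (k = 0)
        omega
      refine ⟨s((⟨⟨I, hIp⟩, 0⟩ : Σ i : Fin p, Fin (m i + 1)), ⟨⟨I, hIp⟩, ⟨k, hkIlt⟩⟩), ?_, ?_⟩
      · rw [SimpleGraph.mem_edgeSet]
        exact ⟨rfl, Or.inl ⟨rfl, hkne⟩⟩
      · simp only [S2v_mk, hsumval ⟨I, hIp⟩ ⟨k, hkIlt⟩ hkne]
        have hval' : TT p mv ((⟨k, hkIlt⟩ : Fin (m ⟨I, hIp⟩ + 1)).val - 1) +
            poss r mv (⟨I, hIp⟩ : Fin p).val (⟨k, hkIlt⟩ : Fin (m ⟨I, hIp⟩ + 1)).val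
            = n + M + 1 - y := hval
        have hval2 : TT p mv (k - 1) + poss r mv I k = n + M + 1 - y := hval
        omega
  have hncard : (constellationGraph p m).edgeSet.ncard = M := by
    have h2 : (Set.Icc (n + 1) (n + M)).ncard = (constellationGraph p m).edgeSet.ncard := by
      rw [← hEdgeBij.image_eq, Set.ncard_image_of_injOn hEdgeBij.injOn]
    rw [← Finset.coe_Icc, Set.ncard_coe_finset, Nat.card_Icc] at h2
    omega
  refine ⟨Sum.elim (gv r p m) (fun e => kC - S2v r p m e.val), ⟨⟨kC, ?_, ?_⟩, ?_⟩, ?_, ?_⟩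
  · -- BijOn
    rw [hcard, hncard]
    refine ⟨?_, ?_, ?_⟩
    · rintro (v | e) -
      · have hb := hgbij.mapsTo (Set.mem_univ v)
        simp only [Set.mem_Icc] at hb ⊢
        simp only [Sum.elim_inl]
        omega
      · have hb := hEdgeBij.mapsTo e.2
        simp only [Set.mem_Icc] at hb ⊢
        simp only [Sum.elim_inr]
        omega
    · rintro (v | e) - (v' | e') - h <;> simp only [Sum.elim_inl, Sum.elim_inr] at h
      · exact congrArg Sum.inl (hgbij.injOn (Set.mem_univ v) (Set.mem_univ v') h)
      · exfalso
        have hb := hgbij.mapsTo (Set.mem_univ v)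
        have hb' := hEdgeBij.mapsTo e'.2
        simp only [Set.mem_Icc] at hb hb'
        omega
      · exfalso
        have hb := hgbij.mapsTo (Set.mem_univ v')
        have hb' := hEdgeBij.mapsTo e.2
        simp only [Set.mem_Icc] at hb hb'
        omega
      · exact congrArg Sum.inr (Subtype.ext (hEdgeBij.injOn e.2 e'.2 h))
    · intro y hy
      simp only [Set.mem_Icc] at hy
      rcases le_or_gt y n with hyn | hyn
      · obtain ⟨v, -, hv⟩ := hgbij.surjOn (Set.mem_Icc.mpr ⟨hy.1, hyn⟩)
        exact ⟨Sum.inl v, Set.mem_univ _, hv⟩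
      · obtain ⟨e, he, hv⟩ := hEdgeBij.surjOn (Set.mem_Icc.mpr ⟨by omega, hy.2⟩)
        exact ⟨Sum.inr ⟨e, he⟩, Set.mem_univ _, hv⟩
  · -- magic sums
    intro u v hadj
    simp only [Sum.elim_inl, Sum.elim_inr, S2v_mk]
    have hu := (hgbij.mapsTo (Set.mem_univ u)).2
    have hv := (hgbij.mapsTo (Set.mem_univ v)).2
    omega
  · -- vertex range
    simp only [Sum.elim_inl]
    rw [← Set.image_univ, hgbij.image_eq, hcard]
  · -- centers
    intro i
    simp [gv]
  · -- least sum
    intro hgt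
    rw [hcard] at hgt
    have hM1 : 1 ≤ M := by omega
    constructor
    · obtain ⟨⟨I, k⟩, hdom, hval⟩ := corePoss.surjOn (Set.mem_Icc.mpr ⟨le_rfl, hM1⟩)
      simp only [Set.mem_setOf_eq] at hdom
      obtain ⟨hIp, hk1, hkm⟩ := hdom
      have hmvI : mv I = m ⟨I, hIp⟩ := hmv ⟨I, hIp⟩
      have hkm' : k ≤ mv I := hkm
      have hkIlt : k < m ⟨I, hIp⟩ + 1 := by omega
      refine ⟨⟨⟨I, hIp⟩, 0⟩, ⟨⟨I, hIp⟩, ⟨k, hkIlt⟩⟩, ⟨rfl, Or.inl ⟨rfl, by simpa using (by omega : ¬ k = 0)⟩⟩, ?_⟩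
      simp only [Sum.elim_inl]
      rw [hsumval ⟨I, hIp⟩ ⟨k, hkIlt⟩ (by simpa using (by omega : ¬ k = 0))]
      have hval' : TT p mv ((⟨k, hkIlt⟩ : Fin (m ⟨I, hIp⟩ + 1)).val - 1) +
          poss r mv (⟨I, hIp⟩ : Fin p).val (⟨k, hkIlt⟩ : Fin (m ⟨I, hIp⟩ + 1)).val = 1 := hval
      omega
    · rintro x ⟨u, v, hadj, rfl⟩
      have he : s(u, v) ∈ (constellationGraph p m).edgeSet := (constellationGraph p m).mem_edgeSet.mpr hadj
      obtain ⟨I, k, hk, heq⟩ := hedge _ he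
      have hval := hsumval I k hk
      have hpos := (corePoss.mapsTo (hdompair I k hk)).1
      simp only at hpos
      rw [Sym2.eq_iff] at heq
      simp only [Sum.elim_inl]
      rcases heq with ⟨hu, hv⟩ | ⟨hu, hv⟩ <;> rw [hu, hv] <;> omega
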